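/- Let L1, C2, L3, C4, E, G > 0 and let u : ℝ → (0,1) be continuous. Let i1, v2, i3, v4 : ℝ → ℝ be differentiable and satisfy the Ćuk converter dynamics L1 i1' = −(1−u)v2 + E, C2 v2' = (1−u)i1 + u i3, L3 i3' = −u v2 − v4, C4 v4' = i3 − G v4. Set y := (v2, v4), x := (i1, i3), and let χ : ℝ → ℝ² be differentiable with χ1' = −(1−u)y1/L1 + E/L1 and χ2' = −u y1/L3 − y2/L3. Set θ := x(0) − χ(0). Then for all t ≥ 0: y1'(t) = (1−u(t))(χ1(t)+θ1)/C2 + u(t)(χ2(t)+θ2)/C2 and y2'(t) = (χ2(t)+θ2)/C4 − G y2(t)/C4; i.e., ẏ = Φ0(χ,y,u) + Φ1(u)θ with Φ0(χ,y,u) = ((1−u)χ1/C2 + uχ2/C2, χ2/C4 − G y2/C4) and Φ1(u) = [[(1−u)/C2, u/C2], [0, 1/C4]]. -/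

import Mathlib

lemma cuk_const_of_same_deriv {f g : ℝ → ℝ} {d : ℝ → ℝ}
    (hf : ∀ t, HasDerivAt f (d t) t) (hg : ∀ t, HasDerivAt g (d t) t) (t : ℝ) :
    f t - g t = f 0 - g 0 := by
  have h : ∀ s, HasDerivAt (fun x => f x - g x) 0 s := by
    intro s; simpa using (hf s).fun_sub (hg s)
  have := is_const_of_deriv_eq_zero (f := fun x => f x - g x)
    (fun s => (h s).differentiableAt) (fun s => (h s).deriv) t 0
  simpa using this

/-- **Linear regression form for the Ćuk converter, measurement Case I
(voltages `y = (v2, v4)` measured, currents `x = (i1, i3)` observed).**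
Along trajectories of `L1 i1' = −(1−u)v2 + E`, `C2 v2' = (1−u)i1 + u i3`,
`L3 i3' = −u v2 − v4`, `C4 v4' = i3 − G v4`, with the dynamic extension
`χ1' = (−(1−u)y1 + E)/L1`, `χ2' = (−u y1 − y2)/L3` and `θ := x(0) − χ(0)`, one has
`y1' = (1−u)(χ1+θ1)/C2 + u(χ2+θ2)/C2` and `y2' = (χ2+θ2)/C4 − G y2/C4` for all `t ≥ 0`,
i.e. `ẏ = Φ0(χ,y,u) + Φ1(u)θ`. -/
theorem stmt12 (L1 C2 L3 C4 E G : ℝ)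
    (hL1 : 0 < L1) (hC2 : 0 < C2) (hL3 : 0 < L3) (hC4 : 0 < C4) (hE : 0 < E) (hG : 0 < G)
    (u : ℝ → ℝ) (hu : Continuous u) (hu01 : ∀ t, u t ∈ Set.Ioo (0 : ℝ) 1)
    (i1 v2 i3 v4 : ℝ → ℝ)
    (hi1 : ∀ t, HasDerivAt i1 ((-(1 - u t) * v2 t + E) / L1) t)
    (hv2 : ∀ t, HasDerivAt v2 (((1 - u t) * i1 t + u t * i3 t) / C2) t)
    (hi3 : ∀ t, HasDerivAt i3 ((-(u t) * v2 t - v4 t) / L3) t)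
    (hv4 : ∀ t, HasDerivAt v4 ((i3 t - G * v4 t) / C4) t)
    (χ1 χ2 : ℝ → ℝ)
    (hχ1 : ∀ t, HasDerivAt χ1 (-(1 - u t) * v2 t / L1 + E / L1) t)
    (hχ2 : ∀ t, HasDerivAt χ2 (-(u t) * v2 t / L3 - v4 t / L3) t)
    (θ1 θ2 : ℝ) (hθ1 : θ1 = i1 0 - χ1 0) (hθ2 : θ2 = i3 0 - χ2 0) :
    ∀ t : ℝ, 0 ≤ t →
      HasDerivAt v2 ((1 - u t) * (χ1 t + θ1) / C2 + u t * (χ2 t + θ2) / C2) t ∧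
      HasDerivAt v4 ((χ2 t + θ2) / C4 - G * v4 t / C4) t := by
  intro t ht
  have h1 : ∀ s, i1 s - χ1 s = θ1 := by
    intro s
    have hχ1' : ∀ s, HasDerivAt χ1 ((-(1 - u s) * v2 s + E) / L1) s := by
      intro s
      have := hχ1 s
      rw [show -(1 - u s) * v2 s / L1 + E / L1 = (-(1 - u s) * v2 s + E) / L1 by ring] at this
      exact this
    rw [hθ1]
    exact cuk_const_of_same_deriv hi1 hχ1' s
  have h2 : ∀ s, i3 s - χ2 s = θ2 := by
    intro s
    have hχ2' : ∀ s, HasDerivAt χ2 ((-(u s) * v2 s - v4 s) / L3) s := by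
      intro s
      have := hχ2 s
      rw [show -(u s) * v2 s / L3 - v4 s / L3 = (-(u s) * v2 s - v4 s) / L3 by ring] at this
      exact this
    rw [hθ2]
    exact cuk_const_of_same_deriv hi3 hχ2' s
  have e1 : i1 t = χ1 t + θ1 := by have := h1 t; linarith
  have e3 : i3 t = χ2 t + θ2 := by have := h2 t; linarith
  constructor
  · have := hv2 t
    rw [e1, e3, show ((1 - u t) * (χ1 t + θ1) + u t * (χ2 t + θ2)) / C2
      = (1 - u t) * (χ1 t + θ1) / C2 + u t * (χ2 t + θ2) / C2 by ring] at this
    exact this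
  · have := hv4 t
    rw [e3, show (χ2 t + θ2 - G * v4 t) / C4 = (χ2 t + θ2) / C4 - G * v4 t / C4 by ring] at this
    exact this
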